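/- Consider the DFA A constructed from a satisfying assignment β of a pure CNF formula (states s_0,...,s_{k-1} with k = n+m, δ(s_i,a)=s_{(i+1) mod k}, δ(s_i,b)=s_{m+j_i} where x_{j_i} is a variable of C_i satisfied by β for i<m, δ(s_{m+j},b)=s_0 if β(x_j)=true and δ(s_{m+j},b)=s_{m+j} otherwise, F={s_0}). Then A rejects every word a^i b a^{k-r} with 0 ≤ i < m, 0 ≤ r < k, and (r < m or x_{r-m} ∉ C_i). -/
import Mathlib
set_option maxHeartbeats 1000000


lemma evalFrom_replicate_false {m n : ℕ} (hk : 0 < m + n) (A : DFA Bool (Fin (m + n)))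
    (hstepa : ∀ t : Fin (m + n),
      A.step t false = ⟨((t : ℕ) + 1) % (m + n), Nat.mod_lt _ hk⟩) :
    ∀ (c : ℕ) (t : Fin (m + n)),
      A.evalFrom t (List.replicate c false) = ⟨((t : ℕ) + c) % (m + n), Nat.mod_lt _ hk⟩ := by
  intro c
  induction c with
  | zero => intro t; simp [DFA.evalFrom, Fin.ext_iff, Nat.mod_eq_of_lt t.isLt]
  | succ c ih =>
      intro t
      rw [List.replicate_succ]
      have : A.evalFrom t (false :: List.replicate c false)
          = A.evalFrom (A.step t false) (List.replicate c false) := rfl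
      rw [this, hstepa, ih]
      apply Fin.ext
      show (((t : ℕ) + 1) % (m + n) + c) % (m + n) = ((t : ℕ) + (c + 1)) % (m + n)
      rw [Nat.mod_add_mod]
      congr 1
      omega

/-- Letter `a` is `false`, letter `b` is `true`. The DFA constructed from a satisfying
assignment `β` of a pure CNF formula (states `Fin (m + n)`: clause states `0, …, m-1`,
variable states `m, …, m+n-1`, `a`-transitions forming a cycle, `b`-transitions given by a
witness `w i ∈ C i` with `β (w i) = pos i`, unique accepting state `s₀`) rejects every
word `a^i b a^{k-r}` with `i < m`, `r < k = m + n`, and (`r < m` or `x_{r-m} ∉ C i`). -/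
theorem constructed_dfa_rejects_third_negative_set (n m : ℕ) (hn : 1 ≤ n) (hm : 1 ≤ m)
    (C : Fin m → Finset (Fin n)) (pos : Fin m → Bool)
    (β : Fin n → Bool) (w : Fin m → Fin n)
    (hw : ∀ i, w i ∈ C i ∧ β (w i) = pos i)
    (A : DFA Bool (Fin (m + n)))
    (hstart : A.start = ⟨0, by omega⟩)
    (hacc : A.accept = {A.start})
    (hstepa : ∀ t : Fin (m + n),
      A.step t false = ⟨((t : ℕ) + 1) % (m + n), Nat.mod_lt _ (by omega)⟩)
    (hstepb1 : ∀ i : Fin m, A.step (Fin.castAdd n i) true = Fin.natAdd m (w i))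
    (hstepb2 : ∀ j : Fin n,
      A.step (Fin.natAdd m j) true = if β j then A.start else Fin.natAdd m j) :
    ∀ i : Fin m, ∀ r : ℕ, r < m + n →
      (r < m ∨ ∀ j : Fin n, m + (j : ℕ) = r → j ∉ C i) →
      List.replicate (i : ℕ) false ++ [true] ++ List.replicate (m + n - r) false
        ∉ A.accepts := by
  intro i r hr hcond hmem
  have hk : 0 < m + n := by omega
  have hrep := evalFrom_replicate_false hk A hstepa
  rw [DFA.mem_accepts] at hmem
  rw [hacc] at hmem
  -- compute eval
  have h1 : A.evalFrom A.start (List.replicate (i : ℕ) false)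
      = ⟨(i : ℕ), by omega⟩ := by
    rw [hrep, hstart]
    simp [Fin.ext_iff, Nat.mod_eq_of_lt (show (i : ℕ) < m + n by omega)]
  have h2 : A.eval (List.replicate (i : ℕ) false ++ [true] ++ List.replicate (m + n - r) false)
      = A.evalFrom (A.step ⟨(i : ℕ), by omega⟩ true) (List.replicate (m + n - r) false) := by
    rw [DFA.eval, List.append_assoc, DFA.evalFrom_of_append, h1,
      List.singleton_append]
    rfl
  have hcast : (⟨(i : ℕ), by omega⟩ : Fin (m + n)) = Fin.castAdd n i := by
    simp [Fin.ext_iff]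
  rw [h2, hcast, hstepb1, hrep] at hmem
  rw [hstart, Set.mem_singleton_iff, Fin.ext_iff] at hmem
  simp only [Fin.coe_natAdd] at hmem
  -- hmem : (m + w i + (m + n - r)) % (m + n) = 0
  have hwi : (w i : ℕ) < n := (w i).isLt
  have heq : m + (w i : ℕ) = r := by
    rcases lt_or_ge (m + (w i : ℕ) + (m + n - r)) (m + n) with h | h
    · rw [Nat.mod_eq_of_lt h] at hmem; omega
    · rw [Nat.mod_eq_sub_mod h,
        Nat.mod_eq_of_lt (by omega : m + (w i : ℕ) + (m + n - r) - (m + n) < m + n)] at hmem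
      omega
  rcases hcond with h | h
  · omega
  · exact h (w i) heq (hw i).1
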